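/- Define f : ℝ → ℝ by f(x) = x if x ∈ ℚ and f(x) = x² if x ∉ ℚ. Then Δ_{h_1} Δ_{h_2} Δ_{h_3} f(x) = 0 for all x ∈ ℝ and all h_1, h_2, h_3 ∈ ℚ, but there exist x, h ∈ ℝ with Δ_h Δ_h Δ_h f(x) ≠ 0 (indeed f is not a polynomial function and satisfies no Fréchet equation Δ_h^s f ≡ 0 on all of ℝ×ℝ). -/

import Mathlib

/-- The difference operator `Δ_h f (x) = f (x + h) - f x`. -/
def dd {X Y : Type*} [Add X] [Sub Y] (h : X) (f : X → Y) : X → Y :=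
  fun x => f (x + h) - f x

/-- Iterated difference `Δ_{h₁}(Δ_{h₂ ⋯ hₛ} f)` for a list of steps. -/
def ddIter {X Y : Type*} [Add X] [Sub Y] (hs : List X) (f : X → Y) : X → Y :=
  hs.foldr dd f

lemma dd_add (h : ℝ) (g e : ℝ → ℝ) :
    dd h (fun y => g y + e y) = fun y => dd h g y + dd h e y := by
  funext y; simp only [dd]; ring

lemma iter_add (h : ℝ) (s : ℕ) : ∀ (g e : ℝ → ℝ) (x : ℝ),
    (dd h)^[s] (fun y => g y + e y) x = (dd h)^[s] g x + (dd h)^[s] e x := by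
  induction s with
  | zero => intro g e x; simp
  | succ n ih =>
    intro g e x
    rw [Function.iterate_succ_apply, Function.iterate_succ_apply,
      Function.iterate_succ_apply, dd_add]
    exact ih _ _ x

lemma sq3 (h : ℝ) : (dd h)^[3] (fun y : ℝ => y ^ 2) = fun _ => 0 := by
  funext x
  show dd h (dd h (dd h (fun y : ℝ => y ^ 2))) x = 0
  simp only [dd]; ring

lemma sqs (h : ℝ) (s : ℕ) (hs : 3 ≤ s) :
    (dd h)^[s] (fun y : ℝ => y ^ 2) = fun _ => 0 := by
  obtain ⟨t, rfl⟩ := Nat.exists_eq_add_of_le hs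
  rw [Nat.add_comm, Function.iterate_add_apply, sq3]
  have h0 : dd h (fun _ : ℝ => (0 : ℝ)) = fun _ => 0 := by
    funext x; simp [dd]
  exact Function.iterate_fixed h0 t

lemma vanish (h : ℝ) : ∀ (s : ℕ) (e : ℝ → ℝ) (x : ℝ),
    (∀ k < s, e (x + k * h) = 0) → (dd h)^[s] e x = e (x + s * h) := by
  intro s
  induction s with
  | zero => intro e x _; simp
  | succ n ih =>
    intro e x hk
    rw [Function.iterate_succ_apply, ih (dd h e) x ?_]
    · show e (x + n * h + h) - e (x + n * h) = e (x + (n + 1 : ℕ) * h)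
      rw [hk n (by omega)]
      rw [show x + (n : ℝ) * h + h = x + ((n + 1 : ℕ) : ℝ) * h by push_cast; ring]
      ring
    · intro k hkn
      show e (x + k * h + h) - e (x + k * h) = 0
      rw [hk k (by omega),
        show x + (k : ℝ) * h + h = x + ((k + 1 : ℕ) : ℝ) * h by push_cast; ring,
        hk (k + 1) (by omega)]
      ring

theorem stmt19 (f : ℝ → ℝ)
    (hf1 : ∀ q : ℚ, f (q : ℝ) = (q : ℝ))
    (hf2 : ∀ x : ℝ, Irrational x → f x = x ^ 2) :
    (∀ (x : ℝ) (h₁ h₂ h₃ : ℚ),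
        dd (h₁ : ℝ) (dd (h₂ : ℝ) (dd (h₃ : ℝ) f)) x = 0) ∧
    (∀ s : ℕ, ∃ x h : ℝ, (dd h)^[s] f x ≠ 0) := by
  constructor
  · intro x h₁ h₂ h₃
    simp only [dd]
    by_cases hx : Irrational x
    · rw [hf2 x hx,
        hf2 _ (hx.add_ratCast h₁), hf2 _ (hx.add_ratCast h₂), hf2 _ (hx.add_ratCast h₃),
        hf2 _ ((hx.add_ratCast h₁).add_ratCast h₂), hf2 _ ((hx.add_ratCast h₁).add_ratCast h₃),
        hf2 _ ((hx.add_ratCast h₂).add_ratCast h₃),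
        hf2 _ (((hx.add_ratCast h₁).add_ratCast h₂).add_ratCast h₃)]
      ring
    · rw [Irrational, not_not] at hx
      obtain ⟨q, rfl⟩ := hx
      simp only [← Rat.cast_add, hf1]
      push_cast
      ring
  · intro s
    match s with
    | 0 =>
      refine ⟨1, 0, ?_⟩
      simpa using by rw [show (1 : ℝ) = ((1 : ℚ) : ℝ) by norm_num, hf1]; norm_num
    | 1 =>
      refine ⟨0, 1, ?_⟩
      show dd 1 f 0 ≠ 0
      simp only [dd, zero_add]
      rw [show (1 : ℝ) = ((1 : ℚ) : ℝ) by norm_num,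
        show (0 : ℝ) = ((0 : ℚ) : ℝ) by norm_num, hf1, hf1]
      norm_num
    | 2 =>
      refine ⟨0, Real.sqrt 2, ?_⟩
      show dd (Real.sqrt 2) (dd (Real.sqrt 2) f) 0 ≠ 0
      have hs2 : Irrational (Real.sqrt 2) := irrational_sqrt_two
      have hirr2 : Irrational (((2 : ℚ) : ℝ) * Real.sqrt 2) := hs2.ratCast_mul (by norm_num)
      simp only [dd, zero_add]
      rw [show Real.sqrt 2 + Real.sqrt 2 = ((2 : ℚ) : ℝ) * Real.sqrt 2 by push_cast; ring]
      rw [hf2 _ hirr2, hf2 _ hs2,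
        show (0 : ℝ) = ((0 : ℚ) : ℝ) by norm_num, hf1]
      have : Real.sqrt 2 ^ 2 = 2 := Real.sq_sqrt (by norm_num)
      rw [mul_pow, this]
      norm_num
    | (n + 3) =>
      set m : ℕ := n + 3 with hm
      refine ⟨2 - m * Real.sqrt 2, Real.sqrt 2, ?_⟩
      set x : ℝ := 2 - m * Real.sqrt 2 with hxdef
      set e : ℝ → ℝ := fun y => f y - y ^ 2 with he
      have hfe : f = fun y => y ^ 2 + e y := by funext y; simp [he]
      have key : (dd (Real.sqrt 2))^[m] f x
          = (dd (Real.sqrt 2))^[m] (fun y : ℝ => y ^ 2) x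
            + (dd (Real.sqrt 2))^[m] e x := by
        conv_lhs => rw [hfe]
        exact iter_add _ _ _ _ _
      have hvan : (dd (Real.sqrt 2))^[m] e x = e (x + m * Real.sqrt 2) := by
        apply vanish
        intro k hk
        have hirr : Irrational (x + k * Real.sqrt 2) := by
          have hmk : ((m : ℝ) - k) = ((m - k : ℕ) : ℝ) := by
            push_cast [Nat.cast_sub (le_of_lt hk)]; ring
          have : x + k * Real.sqrt 2 = ((2 : ℚ) : ℝ) - ((m - k : ℕ) : ℝ) * Real.sqrt 2 := by
            rw [hxdef, ← hmk]; push_cast; ring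
          rw [this]
          exact (irrational_sqrt_two.natCast_mul (by omega)).ratCast_sub 2
        simp only [he]
        rw [hf2 _ hirr]; ring
      have hx2 : x + m * Real.sqrt 2 = ((2 : ℚ) : ℝ) := by rw [hxdef]; push_cast; ring
      rw [key, hvan, sqs _ _ (by omega), hx2]
      simp only [he]
      rw [hf1]
      norm_num
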